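/- Let N ≥ 2, 0 ≤ α ≤ 1 and θ, a, σ ∈ ℝ. Let A be a random N×N matrix with zero diagonal whose off-diagonal entries {A_{ij} : i≠j} are mutually independent, each taking the value 1 with probability α and 0 with probability 1−α. Let y = (y_1,…,y_N) be a random vector independent of A such that each product y_i y_j is integrable, E[y_i²] = σ² for all i and E[y_i y_j] = 0 for i ≠ j. Define z = (I + θaA)y and the centered signal z̃ = z − z̄·1_N where z̄ = (1/N)∑_i z_i. Then E[‖z̃‖²] = σ²(N−1)·(1 − 2θaα + θ²a²α((N−1)(1−α) + α)). -/

import Mathlib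

open MeasureTheory ProbabilityTheory Matrix

lemma sum_centered_sq {N : ℕ} (hN : (N:ℝ) ≠ 0) (b : Fin N → Fin N → ℝ) (v : Fin N → ℝ) :
    ∑ i, (∑ j, b i j * v j - (∑ k, ∑ j, b k j * v j)/N)^2
    = ∑ j, ∑ l, ((∑ i, b i j * b i l) - (∑ i, b i j) * (∑ i, b i l) / N) * (v j * v l) := by
  set S : ℝ := ∑ k, ∑ j, b k j * v j with hSdef
  have hS : S = ∑ j, (∑ i, b i j) * v j := by
    rw [hSdef, Finset.sum_comm]
    simp [Finset.sum_mul]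
  have e1 : ∀ i, (∑ j, b i j * v j)^2 = ∑ j, ∑ l, (b i j * b i l) * (v j * v l) := by
    intro i
    rw [sq, Finset.sum_mul_sum]
    exact Finset.sum_congr rfl fun j _ => Finset.sum_congr rfl fun l _ => by ring
  have e2 : S^2 = ∑ j, ∑ l, ((∑ i, b i j) * (∑ i, b i l)) * (v j * v l) := by
    rw [hS, sq, Finset.sum_mul_sum]
    exact Finset.sum_congr rfl fun j _ => Finset.sum_congr rfl fun l _ => by ring
  have step1 : ∑ i, (∑ j, b i j * v j - S/N)^2
      = (∑ i, (∑ j, b i j * v j)^2) - S^2/N := by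
    have h : ∀ i : Fin N, (∑ j, b i j * v j - S/N)^2
        = (∑ j, b i j * v j)^2 - (2/N) * ((∑ j, b i j * v j) * S) + (S/N)^2 := by
      intro i; field_simp; ring
    simp_rw [h]
    rw [Finset.sum_add_distrib, Finset.sum_sub_distrib, ← Finset.mul_sum,
      ← Finset.sum_mul, ← hSdef, Finset.sum_const, Finset.card_univ, Fintype.card_fin,
      nsmul_eq_mul]
    field_simp
    ring
  rw [step1]
  simp_rw [e1]
  rw [Finset.sum_comm]
  have swap2 : ∑ j, ∑ i, ∑ l, (b i j * b i l) * (v j * v l)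
      = ∑ j, ∑ l, (∑ i, b i j * b i l) * (v j * v l) := by
    refine Finset.sum_congr rfl fun j _ => ?_
    rw [Finset.sum_comm]
    exact Finset.sum_congr rfl fun l _ => by rw [Finset.sum_mul]
  rw [swap2, e2, Finset.sum_div, ← Finset.sum_sub_distrib]
  refine Finset.sum_congr rfl fun j _ => ?_
  rw [Finset.sum_div, ← Finset.sum_sub_distrib]
  refine Finset.sum_congr rfl fun l _ => by ring


/-- **Expected squared norm of the centered GMA(1) signal on an Erdős–Rényi graph
(Appendix B of the paper).** Let `A` be a random `N×N` matrix with zero diagonal whose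
off-diagonal entries are mutually independent Bernoulli(α) variables, and let `y` be a
random vector, independent of `A`, with uncorrelated components of mean-zero-type second
moments `E[yᵢ²] = σ²`, `E[yᵢ yⱼ] = 0` (`i ≠ j`). With `z = (I + θa A)y` and
`z̃ = z − z̄·1`, one has
`E[‖z̃‖²] = σ²(N−1)(1 − 2θaα + θ²a²α((N−1)(1−α) + α))`. -/
theorem GMA1_ER_centered_norm_expectation
    {Ω : Type*} [MeasurableSpace Ω] (μ : Measure Ω) [IsProbabilityMeasure μ]
    (N : ℕ) (hN : 2 ≤ N) (α θ a σ : ℝ) (hα : α ∈ Set.Icc (0 : ℝ) 1)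
    (A : Ω → Matrix (Fin N) (Fin N) ℝ)
    (hAmeas : ∀ i j, Measurable fun ω => A ω i j)
    (hdiag : ∀ ω i, A ω i i = 0)
    (hAbin : ∀ ω (i j : Fin N), i ≠ j → (A ω i j = 0 ∨ A ω i j = 1))
    (hAindep : iIndepFun
      (fun x : {x : Fin N × Fin N // x.1 ≠ x.2} => fun ω => A ω x.1.1 x.1.2) μ)
    (hAprob : ∀ i j : Fin N, i ≠ j → μ {ω | A ω i j = 1} = ENNReal.ofReal α)
    (y : Ω → Fin N → ℝ) (hymeas : ∀ i, Measurable fun ω => y ω i)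
    (hindep : IndepFun (fun ω => fun i j => A ω i j) y μ)
    (hint : ∀ i j, Integrable (fun ω => y ω i * y ω j) μ)
    (hvar : ∀ i, ∫ ω, (y ω i) ^ 2 ∂μ = σ ^ 2)
    (hcov : ∀ i j, i ≠ j → ∫ ω, y ω i * y ω j ∂μ = 0) :
    ∫ ω, ∑ i, (((1 + (θ * a) • A ω) *ᵥ y ω) i
        - (∑ j, ((1 + (θ * a) • A ω) *ᵥ y ω) j) / N) ^ 2 ∂μ
      = σ ^ 2 * ((N : ℝ) - 1)
        * (1 - 2 * θ * a * α + θ ^ 2 * a ^ 2 * α * (((N : ℝ) - 1) * (1 - α) + α)) := by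
  obtain ⟨hα0, hα1⟩ := hα
  set t := θ * a with ht
  have hN0 : (N:ℝ) ≠ 0 := Nat.cast_ne_zero.mpr (by omega)
  have hcast1 : ((N - 1 : ℕ) : ℝ) = (N:ℝ) - 1 := by
    have : (1:ℕ) ≤ N := by omega
    push_cast [Nat.cast_sub this]; ring
  have hcast2 : ((N - 2 : ℕ) : ℝ) = (N:ℝ) - 2 := by
    push_cast [Nat.cast_sub hN]; ring
  set B : Ω → Fin N → Fin N → ℝ :=
    fun ω i j => (if i = j then (1:ℝ) else 0) + t * A ω i j with hBdef
  set C : Ω → Fin N → Fin N → ℝ :=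
    fun ω j l => (∑ i, B ω i j * B ω i l) - (∑ i, B ω i j) * (∑ i, B ω i l) / N with hCdef
  have hmv : ∀ ω (i : Fin N), ((1 + t • A ω) *ᵥ y ω) i = ∑ j, B ω i j * y ω j := by
    intro ω i
    simp [Matrix.mulVec, dotProduct, Matrix.add_apply, Matrix.one_apply, Matrix.smul_apply,
      hBdef, smul_eq_mul]
  have hptwise : ∀ ω, (∑ i, (((1 + t • A ω) *ᵥ y ω) i
        - (∑ j, ((1 + t • A ω) *ᵥ y ω) j) / N) ^ 2)
      = ∑ j, ∑ l, C ω j l * (y ω j * y ω l) := by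
    intro ω
    simp_rw [hmv]
    exact sum_centered_sq hN0 (B ω) (y ω)
  -- basic facts about B
  have hBdiag : ∀ ω j, B ω j j = 1 := by intro ω j; simp [hBdef, hdiag]
  have hBoff : ∀ ω (i j : Fin N), i ≠ j → B ω i j = t * A ω i j := by
    intro ω i j h; simp [hBdef, h]
  have hAbound : ∀ ω (i j : Fin N), |A ω i j| ≤ 1 := by
    intro ω i j
    rcases eq_or_ne i j with rfl | h
    · simp [hdiag]
    · rcases hAbin ω i j h with h | h <;> simp [h]
  have hBbound : ∀ ω (i j : Fin N), |B ω i j| ≤ 1 + |t| := by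
    intro ω i j
    refine (abs_add_le _ _).trans (add_le_add ?_ ?_)
    · split <;> simp
    · rw [abs_mul]
      calc |t| * |A ω i j| ≤ |t| * 1 :=
        mul_le_mul_of_nonneg_left (hAbound ω i j) (abs_nonneg t)
      _ = |t| := mul_one _
  have hBmeas : ∀ i j, Measurable fun ω => B ω i j := by
    intro i j
    exact measurable_const.add ((hAmeas i j).const_mul t)
  have hBBint : ∀ (i j k l : Fin N), Integrable (fun ω => B ω i j * B ω k l) μ := by
    intro i j k l
    refine (integrable_const ((1 + |t|) * (1 + |t|))).mono'
      ((hBmeas i j).mul (hBmeas k l)).aestronglyMeasurable (ae_of_all _ fun ω => ?_)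
    rw [Real.norm_eq_abs, abs_mul]
    exact mul_le_mul (hBbound ω i j) (hBbound ω k l) (abs_nonneg _) (by positivity)
  -- integrability of C
  have hCmeas : ∀ j l, Measurable fun ω => C ω j l := by
    intro j l
    apply Measurable.sub
    · exact Finset.measurable_sum _ fun i _ => (hBmeas i j).mul (hBmeas i l)
    · exact ((Finset.measurable_sum _ fun i _ => hBmeas i j).mul
        (Finset.measurable_sum _ fun i _ => hBmeas i l)).div_const _
  have hCbound : ∀ j l ω, |C ω j l| ≤ (N:ℝ) * (1 + |t|)^2 + (N:ℝ) * (1 + |t|)^2 := by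
    intro j l ω
    have hs : ∀ m : Fin N, |∑ i, B ω i m| ≤ (N:ℝ) * (1 + |t|) := by
      intro m
      calc |∑ i, B ω i m| ≤ ∑ i, |B ω i m| := Finset.abs_sum_le_sum_abs _ _
      _ ≤ ∑ _i : Fin N, (1 + |t|) := Finset.sum_le_sum fun i _ => hBbound ω i m
      _ = (N:ℝ) * (1 + |t|) := by
          rw [Finset.sum_const, Finset.card_univ, Fintype.card_fin, nsmul_eq_mul]
    have h1 : |∑ i, B ω i j * B ω i l| ≤ (N:ℝ) * (1 + |t|)^2 := by
      calc |∑ i, B ω i j * B ω i l| ≤ ∑ i, |B ω i j * B ω i l| :=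
        Finset.abs_sum_le_sum_abs _ _
      _ ≤ ∑ _i : Fin N, (1 + |t|)^2 := by
          refine Finset.sum_le_sum fun i _ => ?_
          rw [abs_mul, sq]
          exact mul_le_mul (hBbound ω i j) (hBbound ω i l) (abs_nonneg _) (by positivity)
      _ = (N:ℝ) * (1 + |t|)^2 := by
          rw [Finset.sum_const, Finset.card_univ, Fintype.card_fin, nsmul_eq_mul]
    have h2 : |(∑ i, B ω i j) * (∑ i, B ω i l) / N| ≤ (N:ℝ) * (1 + |t|)^2 := by
      rw [abs_div, abs_mul, Nat.abs_cast]
      rw [div_le_iff₀ (by positivity : (0:ℝ) < (N:ℝ))]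
      calc |∑ i, B ω i j| * |∑ i, B ω i l| ≤ ((N:ℝ) * (1 + |t|)) * ((N:ℝ) * (1 + |t|)) :=
        mul_le_mul (hs j) (hs l) (abs_nonneg _) (by positivity)
      _ = (N:ℝ) * (1 + |t|)^2 * (N:ℝ) := by ring
    calc |C ω j l| ≤ |∑ i, B ω i j * B ω i l| + |(∑ i, B ω i j) * (∑ i, B ω i l) / N| :=
      abs_sub _ _
    _ ≤ (N:ℝ) * (1 + |t|)^2 + (N:ℝ) * (1 + |t|)^2 := add_le_add h1 h2
  have hCint : ∀ j l, Integrable (fun ω => C ω j l) μ := by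
    intro j l
    refine (integrable_const ((N:ℝ) * (1 + |t|)^2 + (N:ℝ) * (1 + |t|)^2)).mono'
      (hCmeas j l).aestronglyMeasurable (ae_of_all _ fun ω => ?_)
    rw [Real.norm_eq_abs]
    exact hCbound j l ω
  -- independence of C j l from y j * y l
  have hentry : ∀ (i j : Fin N), Measurable fun M : Fin N → Fin N → ℝ => M i j :=
    fun i j => (measurable_pi_apply j).comp (measurable_pi_apply i)
  have hCyindep : ∀ j l, IndepFun (fun ω => C ω j l) (fun ω => y ω j * y ω l) μ := by
    intro j l
    have hφ : Measurable fun M : Fin N → Fin N → ℝ =>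
        (∑ i, ((if i = j then (1:ℝ) else 0) + t * M i j)
            * ((if i = l then (1:ℝ) else 0) + t * M i l))
          - (∑ i, ((if i = j then (1:ℝ) else 0) + t * M i j))
            * (∑ i, ((if i = l then (1:ℝ) else 0) + t * M i l)) / N := by
      apply Measurable.sub
      · exact Finset.measurable_sum _ fun i _ =>
          (measurable_const.add ((hentry i j).const_mul t)).mul
          (measurable_const.add ((hentry i l).const_mul t))
      · exact ((Finset.measurable_sum _ fun i _ =>
          measurable_const.add ((hentry i j).const_mul t)).mul
          (Finset.measurable_sum _ fun i _ =>
            measurable_const.add ((hentry i l).const_mul t))).div_const _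
    have hψ : Measurable fun v : Fin N → ℝ => v j * v l :=
      (measurable_pi_apply j).mul (measurable_pi_apply l)
    exact hindep.comp hφ hψ
  have htermint : ∀ j l, Integrable (fun ω => C ω j l * (y ω j * y ω l)) μ := by
    intro j l
    exact (hCyindep j l).integrable_mul (hCint j l) (hint j l)
  -- expectations of A entries
  have hAint : ∀ i j, Integrable (fun ω => A ω i j) μ := by
    intro i j
    refine (integrable_const (1:ℝ)).mono' (hAmeas i j).aestronglyMeasurable
      (ae_of_all _ fun ω => ?_)
    rw [Real.norm_eq_abs]; exact hAbound ω i j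
  have hEA : ∀ (i j : Fin N), i ≠ j → ∫ ω, A ω i j ∂μ = α := by
    intro i j h
    have hset : MeasurableSet {ω | A ω i j = 1} := hAmeas i j (measurableSet_singleton 1)
    have heq : (fun ω => A ω i j) = Set.indicator {ω | A ω i j = 1} 1 := by
      funext ω
      rcases hAbin ω i j h with h0 | h1
      · simp [Set.indicator_apply, h0, Set.mem_setOf_eq]
      · simp [Set.indicator_apply, h1, Set.mem_setOf_eq]
    rw [heq, integral_indicator_one hset, measureReal_def, hAprob i j h, ENNReal.toReal_ofReal hα0]
  have hEAA : ∀ (i j k l : Fin N), i ≠ j → k ≠ l → (i, j) ≠ (k, l) →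
      ∫ ω, A ω i j * A ω k l ∂μ = α * α := by
    intro i j k l hij hkl hne
    have hI : IndepFun (fun ω => A ω i j) (fun ω => A ω k l) μ := by
      exact hAindep.indepFun
        (show (⟨(i, j), hij⟩ : {x : Fin N × Fin N // x.1 ≠ x.2}) ≠ ⟨(k, l), hkl⟩ by
          simpa [Subtype.ext_iff] using hne)
    have := hI.integral_mul_eq_mul_integral (hAint i j).aestronglyMeasurable (hAint k l).aestronglyMeasurable
    simp only [Pi.mul_apply] at this
    rw [show (fun ω => A ω i j * A ω k l) = (fun ω => A ω i j) * (fun ω => A ω k l) from rfl]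
    exact this.trans (by rw [hEA i j hij, hEA k l hkl])
  have hAsq : ∀ ω (i j : Fin N), A ω i j * A ω i j = A ω i j := by
    intro ω i j
    rcases eq_or_ne i j with rfl | h
    · simp [hdiag]
    · rcases hAbin ω i j h with h | h <;> simp [h]
  -- expectations of B products
  have hEBB2 : ∀ (k j : Fin N), k ≠ j → ∫ ω, B ω j j * B ω k j ∂μ = t * α := by
    intro k j h
    have : (fun ω => B ω j j * B ω k j) = fun ω => t * A ω k j := by
      funext ω; rw [hBdiag, hBoff ω k j h, one_mul]
    rw [this, integral_const_mul, hEA k j h]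
  have hEBB3 : ∀ (i j : Fin N), i ≠ j → ∫ ω, B ω i j * B ω j j ∂μ = t * α := by
    intro i j h
    have : (fun ω => B ω i j * B ω j j) = fun ω => t * A ω i j := by
      funext ω; rw [hBdiag, hBoff ω i j h, mul_one]
    rw [this, integral_const_mul, hEA i j h]
  have hEBB4 : ∀ (i j : Fin N), i ≠ j → ∫ ω, B ω i j * B ω i j ∂μ = t^2 * α := by
    intro i j h
    have : (fun ω => B ω i j * B ω i j) = fun ω => t^2 * A ω i j := by
      funext ω; rw [hBoff ω i j h]
      rw [show t * A ω i j * (t * A ω i j) = t^2 * (A ω i j * A ω i j) by ring, hAsq]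
    rw [this, integral_const_mul, hEA i j h]
  have hEBB5 : ∀ (i k j : Fin N), i ≠ j → k ≠ j → i ≠ k →
      ∫ ω, B ω i j * B ω k j ∂μ = t^2 * (α * α) := by
    intro i k j hij hkj hik
    have : (fun ω => B ω i j * B ω k j) = fun ω => t^2 * (A ω i j * A ω k j) := by
      funext ω; rw [hBoff ω i j hij, hBoff ω k j hkj]; ring
    rw [this, integral_const_mul, hEAA i j k j hij hkj (by simp [hik])]
  -- column computations
  have hcard1 : ∀ j : Fin N, ((Finset.univ.erase j).card : ℝ) = (N:ℝ) - 1 := by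
    intro j
    rw [Finset.card_erase_of_mem (Finset.mem_univ j), Finset.card_univ, Fintype.card_fin, hcast1]
  have h1 : ∀ j : Fin N, ∫ ω, ∑ i, B ω i j * B ω i j ∂μ = 1 + ((N:ℝ) - 1) * (t^2 * α) := by
    intro j
    rw [integral_finset_sum _ fun i _ => hBBint i j i j]
    rw [← Finset.add_sum_erase _ _ (Finset.mem_univ j)]
    have hjj : ∫ ω, B ω j j * B ω j j ∂μ = 1 := by
      have : (fun ω => B ω j j * B ω j j) = fun _ => (1:ℝ) := by
        funext ω; rw [hBdiag]; ring
      rw [this, integral_const]; simp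
    rw [hjj]
    rw [Finset.sum_congr rfl fun i hi => hEBB4 i j (Finset.ne_of_mem_erase hi)]
    rw [Finset.sum_const, nsmul_eq_mul, hcard1 j]
  have hinner1 : ∀ j : Fin N, ∑ k, ∫ ω, B ω j j * B ω k j ∂μ
      = 1 + ((N:ℝ) - 1) * (t * α) := by
    intro j
    rw [← Finset.add_sum_erase _ _ (Finset.mem_univ j)]
    have hjj : ∫ ω, B ω j j * B ω j j ∂μ = 1 := by
      have : (fun ω => B ω j j * B ω j j) = fun _ => (1:ℝ) := by
        funext ω; rw [hBdiag]; ring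
      rw [this, integral_const]; simp
    rw [hjj, Finset.sum_congr rfl fun k hk => hEBB2 k j (Finset.ne_of_mem_erase hk)]
    rw [Finset.sum_const, nsmul_eq_mul, hcard1 j]
  have hinner2 : ∀ (i j : Fin N), i ≠ j → ∑ k, ∫ ω, B ω i j * B ω k j ∂μ
      = t * α + t^2 * α + ((N:ℝ) - 2) * (t^2 * (α * α)) := by
    intro i j hij
    rw [← Finset.add_sum_erase _ _ (Finset.mem_univ j)]
    rw [hEBB3 i j hij]
    have hi_mem : i ∈ Finset.univ.erase j := Finset.mem_erase.mpr ⟨hij, Finset.mem_univ i⟩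
    rw [← Finset.add_sum_erase _ _ hi_mem, hEBB4 i j hij]
    have hrest : ∑ k ∈ (Finset.univ.erase j).erase i, ∫ ω, B ω i j * B ω k j ∂μ
        = ((N:ℝ) - 2) * (t^2 * (α * α)) := by
      rw [Finset.sum_congr rfl fun k hk => ?_]
      · rw [Finset.sum_const, nsmul_eq_mul]
        congr 1
        rw [Finset.card_erase_of_mem hi_mem, Finset.card_erase_of_mem (Finset.mem_univ j),
          Finset.card_univ, Fintype.card_fin]
        rw [show N - 1 - 1 = N - 2 by omega, hcast2]
      · have hki : k ≠ i := Finset.ne_of_mem_erase hk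
        have hkj : k ≠ j := Finset.ne_of_mem_erase (Finset.mem_of_mem_erase hk)
        exact hEBB5 i k j hij hkj (Ne.symm hki)
    rw [hrest]
    ring
  have h2 : ∀ j : Fin N, ∫ ω, (∑ i, B ω i j) * (∑ k, B ω k j) ∂μ
      = (1 + ((N:ℝ) - 1) * (t * α))
        + ((N:ℝ) - 1) * (t * α + t^2 * α + ((N:ℝ) - 2) * (t^2 * (α * α))) := by
    intro j
    have hexp : ∀ ω, (∑ i, B ω i j) * (∑ k, B ω k j) = ∑ i, ∑ k, B ω i j * B ω k j := by
      intro ω; rw [Finset.sum_mul_sum]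
    simp_rw [hexp]
    rw [integral_finset_sum _ fun i _ =>
      integrable_finset_sum _ fun k _ => hBBint i j k j]
    have : ∀ i : Fin N, ∫ ω, ∑ k, B ω i j * B ω k j ∂μ = ∑ k, ∫ ω, B ω i j * B ω k j ∂μ :=
      fun i => integral_finset_sum _ fun k _ => hBBint i j k j
    simp_rw [this]
    rw [← Finset.add_sum_erase _ _ (Finset.mem_univ j), hinner1 j]
    rw [Finset.sum_congr rfl fun i hi => hinner2 i j (Finset.ne_of_mem_erase hi)]
    rw [Finset.sum_const, nsmul_eq_mul, hcard1 j]
  -- expectation of C j j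
  have hECjj : ∀ j : Fin N, ∫ ω, C ω j j ∂μ
      = (1 + ((N:ℝ) - 1) * (t^2 * α))
        - ((1 + ((N:ℝ) - 1) * (t * α))
          + ((N:ℝ) - 1) * (t * α + t^2 * α + ((N:ℝ) - 2) * (t^2 * (α * α)))) / N := by
    intro j
    have hint1 : Integrable (fun ω => ∑ i, B ω i j * B ω i j) μ :=
      integrable_finset_sum _ fun i _ => hBBint i j i j
    have hint2 : Integrable (fun ω => (∑ i, B ω i j) * (∑ i, B ω i j) / N) μ := by
      have : (fun ω => (∑ i, B ω i j) * (∑ i, B ω i j) / N)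
          = fun ω => (∑ i, ∑ k, B ω i j * B ω k j) / N := by
        funext ω; rw [Finset.sum_mul_sum]
      rw [this]
      exact (integrable_finset_sum _ fun i _ =>
        integrable_finset_sum _ fun k _ => hBBint i j k j).div_const _
    have : (fun ω => C ω j j)
        = fun ω => (∑ i, B ω i j * B ω i j) - (∑ i, B ω i j) * (∑ i, B ω i j) / N := rfl
    rw [this, integral_sub hint1 hint2, h1 j]
    rw [integral_div, h2 j]
  -- putting everything together
  have hsplit : ∫ ω, (∑ i, (((1 + t • A ω) *ᵥ y ω) i
        - (∑ j, ((1 + t • A ω) *ᵥ y ω) j) / N) ^ 2) ∂μ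
      = ∑ j, ∑ l, (∫ ω, C ω j l ∂μ) * ∫ ω, y ω j * y ω l ∂μ := by
    rw [integral_congr_ae (ae_of_all _ hptwise)]
    rw [integral_finset_sum _ fun j _ => integrable_finset_sum _ fun l _ => htermint j l]
    refine Finset.sum_congr rfl fun j _ => ?_
    rw [integral_finset_sum _ fun l _ => htermint j l]
    refine Finset.sum_congr rfl fun l _ => ?_
    have := (hCyindep j l).integral_mul_eq_mul_integral (hCint j l).aestronglyMeasurable (hint j l).aestronglyMeasurable
    simpa using this
  rw [hsplit]
  have hdiagsum : ∀ j : Fin N,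
      ∑ l, (∫ ω, C ω j l ∂μ) * ∫ ω, y ω j * y ω l ∂μ = (∫ ω, C ω j j ∂μ) * σ^2 := by
    intro j
    rw [Finset.sum_eq_single j]
    · congr 1
      rw [show (fun ω => y ω j * y ω j) = fun ω => (y ω j)^2 by funext ω; ring, hvar j]
    · intro l _ hl
      rw [hcov j l (Ne.symm hl), mul_zero]
    · intro h; exact absurd (Finset.mem_univ j) h
  rw [Finset.sum_congr rfl fun j _ => hdiagsum j]
  rw [Finset.sum_congr rfl fun j _ => by rw [hECjj j]]
  rw [Finset.sum_const, Finset.card_univ, Fintype.card_fin, nsmul_eq_mul]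
  rw [ht]
  field_simp
  ring
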